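/- Let m ≥ 1 and k be integers. If λ is a complex 6m-th root of unity, then 1 + λ^m + λ^{2m} - λ^k - λ^{m+k} ≠ 0. -/

import Mathlib

/-- If λ is a complex 6m-th root of unity (m ≥ 1, k an integer), then
1 + λ^m + λ^{2m} - λ^k - λ^{m+k} ≠ 0. -/
theorem stmt_4 (m : ℕ) (hm : 1 ≤ m) (k : ℤ) (lam : ℂ) (hlam : lam ^ (6 * m) = 1) :
    1 + lam ^ m + lam ^ (2 * m) - lam ^ k - lam ^ ((m : ℤ) + k) ≠ 0 := by
  intro h
  have hl0 : lam ≠ 0 := by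
    intro h0
    rw [h0, zero_pow (by omega)] at hlam
    exact zero_ne_one hlam
  have habs : ‖lam‖ = 1 := by
    have h1 : ‖lam‖ ^ (6 * m) = 1 := by
      rw [← norm_pow, hlam, norm_one]
    rcases lt_trichotomy (‖lam‖) 1 with hlt | heq | hgt
    · have := pow_lt_one₀ (norm_nonneg lam) hlt (n := 6 * m) (by omega)
      rw [h1] at this; exact absurd this (lt_irrefl 1)
    · exact heq
    · have := one_lt_pow₀ hgt (n := 6 * m) (by omega)
      rw [h1] at this; exact absurd this (lt_irrefl 1)
  set μ : ℂ := lam ^ m with hμdef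
  set z : ℂ := lam ^ k with hzdef
  have hμ0 : μ ≠ 0 := pow_ne_zero _ hl0
  have hz0 : z ≠ 0 := zpow_ne_zero _ hl0
  have hzabs : ‖z‖ = 1 := by
    rw [hzdef, norm_zpow, habs, one_zpow]
  have hμabs : ‖μ‖ = 1 := by
    rw [hμdef, norm_pow, habs, one_pow]
  have h2m : lam ^ (2 * m) = μ ^ 2 := by
    rw [hμdef, ← pow_mul, mul_comm]
  have hmk : lam ^ ((m : ℤ) + k) = μ * z := by
    rw [zpow_add₀ hl0, zpow_natCast]
  rw [h2m, hmk] at h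
  have h6 : μ ^ 6 = 1 := by
    rw [hμdef, ← pow_mul, mul_comm]; exact hlam
  have hsplit : (μ ^ 3 - 1) * (μ ^ 3 + 1) = 0 := by linear_combination h6
  rcases mul_eq_zero.mp hsplit with hA | hB
  · -- μ^3 = 1
    have hA' : (μ - 1) * (μ ^ 2 + μ + 1) = 0 := by linear_combination hA
    rcases mul_eq_zero.mp hA' with h1 | h1
    · -- μ = 1
      have hμ1 : μ = 1 := by linear_combination h1
      have h3 : (2 : ℂ) * z = 3 := by
        rw [hμ1] at h; linear_combination -h
      have := congrArg norm h3
      rw [norm_mul, hzabs] at this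
      norm_num [Complex.norm_ofNat] at this
    · -- μ^2 + μ + 1 = 0
      have hz1 : z * (1 + μ) = 0 := by linear_combination -h + h1
      rcases mul_eq_zero.mp hz1 with h2 | h2
      · exact hz0 h2
      · have hμm1 : μ = -1 := by linear_combination h2
        rw [hμm1] at h1
        norm_num at h1
  · -- μ^3 = -1
    have hB' : (μ + 1) * (μ ^ 2 - μ + 1) = 0 := by linear_combination hB
    rcases mul_eq_zero.mp hB' with h1 | h1
    · -- μ = -1
      have hμm1 : μ = -1 := by linear_combination h1
      rw [hμm1] at h
      norm_num at h
    · -- μ^2 - μ + 1 = 0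
      have key : 2 * μ = z * (1 + μ) := by linear_combination h - h1
      have hsq : (4 * μ) * μ = (3 * z ^ 2) * μ := by
        linear_combination (2 * μ + z * (1 + μ)) * key + z ^ 2 * h1
      have h5 : 4 * μ = 3 * z ^ 2 := mul_right_cancel₀ hμ0 hsq
      have := congrArg norm h5
      simp only [norm_mul, norm_pow, habs, hzabs, hμabs, one_pow, mul_one] at this
      norm_num [Complex.norm_ofNat] at this
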